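/- arXiv:1311.7587 — 3 statements merged into one kernel-verified Lean document; each statement's English description precedes it below -/
import Mathlib

section
/- Let J be a Jordan algebra over a field of characteristic 0 and let Z_alt(J) = { z ∈ J | (z,x,y)+(z,y,x)=0 for all x,y } be its alternative center. Then for any z ∈ Z_alt(J) and any a,b ∈ J, one has (a,z,b) = 2(z,a,b). -/
/-- The associator `(a,b,c) = (ab)c - a(bc)`. -/
def assoc {A : Type*} [NonUnitalNonAssocCommRing A] (a b c : A) : A := (a*b)*c - a*(b*c)

variable {K : Type*} [Field K] [CharZero K]
variable {J : Type*} [NonUnitalNonAssocCommRing J] [Module K J]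
  [SMulCommClass K J J] [IsScalarTower K J J]

lemma assoc_flip {A : Type*} [NonUnitalNonAssocCommRing A] (a b c : A) :
    assoc a b c = - assoc c b a := by
  simp only [assoc]
  rw [mul_comm c b, mul_comm (b*c) a, mul_comm b a, mul_comm c (a*b)]
  abel

lemma assoc_cyclic {A : Type*} [NonUnitalNonAssocCommRing A] (a b c : A) :
    assoc a b c + assoc b c a + assoc c a b = 0 := by
  simp only [assoc]
  rw [mul_comm (b*c) a, mul_comm (c*a) b, mul_comm c (a*b)]
  abel

/-- In a Jordan algebra over a field of characteristic 0, for `z` in the alternative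
center (`(z,x,y)+(z,y,x)=0` for all `x,y`), one has `(a,z,b) = 2(z,a,b)`. -/
theorem stmt9 (hJordan : ∀ x y : J, assoc (x*x) y x = 0)
    (z : J) (hz : ∀ x y : J, assoc z x y + assoc z y x = 0) :
    ∀ a b : J, assoc a z b = 2 • assoc z a b := by
  intro a b
  have h1 := hz b a
  have h2 := assoc_cyclic a z b
  have h3 := assoc_flip b a z
  rw [two_smul]
  have h4 : assoc b a z = - assoc z a b := h3
  rw [h4] at h2
  have h5 : assoc z b a = - assoc z a b := by
    rw [eq_neg_iff_add_eq_zero]; exact h1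
  rw [h5] at h2
  apply eq_of_sub_eq_zero
  rw [← h2]; abel
end

section
/- Let A be an algebra with a derivation D over a commutative ring. Then D(A)³ ⊆ D(A²)A + D(A²), i.e., any product D(a)D(b)D(c) (with any bracketing) lies in the ideal-like set generated by elements D(uv)w and D(uv). In particular, in a commutative associative algebra A, D(a)D(b)D(c) can be written as a sum of elements of the form D(u²)v with u,v ∈ A (over a field of characteristic 0). -/
/-- Let `A` be a commutative associative algebra over a field of characteristic 0 with a
derivation `D`. Then for all `a,b,c ∈ A`, the product `D(a)D(b)D(c)` lies in the span of
the elements `D(u²)·v` together with the elements `D(u²)`, `u, v ∈ A`. -/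
theorem stmt16 {K : Type*} [Field K] [CharZero K]
    {A : Type*} [CommRing A] [Algebra K A]
    (D : A →ₗ[K] A) (hD : ∀ a b : A, D (a*b) = D a * b + a * D b) :
    ∀ a b c : A,
      D a * D b * D c ∈
        Submodule.span K ({y : A | ∃ u v : A, y = D (u*u) * v} ∪
          {y : A | ∃ u : A, y = D (u*u)}) := by
  intro a b c
  set M := Submodule.span K ({y : A | ∃ u v : A, y = D (u*u) * v} ∪
      {y : A | ∃ u : A, y = D (u*u)}) with hM
  have gen : ∀ u v : A, D (u*u) * v ∈ M :=
    fun u v => Submodule.subset_span (Or.inl ⟨u, v, rfl⟩)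
  -- polarization: x·D(y)·v + y·D(x)·v ∈ M
  have hs : ∀ x y v : A, x * D y * v + y * D x * v ∈ M := by
    intro x y v
    have h2 : (2:K) • (x * D y * v + y * D x * v)
        = D ((x+y)*(x+y)) * v - D (x*x) * v - D (y*y) * v := by
      rw [hD, hD, hD, map_add, two_smul]; ring
    have hm : (2:K) • (x * D y * v + y * D x * v) ∈ M := by
      rw [h2]
      exact M.sub_mem (M.sub_mem (gen _ _) (gen _ _)) (gen _ _)
    have h3 := M.smul_mem ((2:K)⁻¹) hm
    rwa [inv_smul_smul₀ two_ne_zero] at h3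
  have A1 := hs (D a * D b) c 1
  rw [hD] at A1
  have A2 := hs (c * D (D a)) b 1
  rw [hD] at A2
  have A3 := hs (c * D (D b)) a 1
  rw [hD] at A3
  have A4 := hs (b * D c) (D a) 1
  rw [hD] at A4
  have A5 := hs (a * D c) (D b) 1
  rw [hD] at A5
  have A6 := hs (b * D (D c)) a 1
  rw [hD] at A6
  have A7 := hs (a * b) (D (D c)) 1
  rw [hD] at A7
  have A8 := hs a b (D (D c))
  have A9 := hs (b * c) (D (D a)) 1
  rw [hD] at A9
  have A10 := hs b c (D (D a))
  have A11 := hs (a * c) (D (D b)) 1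
  rw [hD] at A11
  have A12 := hs a c (D (D b))
  have hmem := M.sub_mem (M.add_mem (M.sub_mem (M.add_mem (M.sub_mem (M.add_mem
    (M.sub_mem (M.add_mem (M.add_mem (M.sub_mem (M.sub_mem A1 A2) A3) A4) A5) A6)
    A7) A8) A9) A10) A11) A12
  have key : (3:K) • (D a * D b * D c) =
      ((D a * D b) * D c * 1 + c * (D (D a) * D b + D a * D (D b)) * 1)
      - (c * D (D a) * D b * 1 + b * (D c * D (D a) + c * D (D (D a))) * 1)
      - (c * D (D b) * D a * 1 + a * (D c * D (D b) + c * D (D (D b))) * 1)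
      + (b * D c * D (D a) * 1 + D a * (D b * D c + b * D (D c)) * 1)
      + (a * D c * D (D b) * 1 + D b * (D a * D c + a * D (D c)) * 1)
      - (b * D (D c) * D a * 1 + a * (D b * D (D c) + b * D (D (D c))) * 1)
      + ((a * b) * D (D (D c)) * 1 + D (D c) * (D a * b + a * D b) * 1)
      - (a * D b * D (D c) + b * D a * D (D c))
      + ((b * c) * D (D (D a)) * 1 + D (D a) * (D b * c + b * D c) * 1)
      - (b * D c * D (D a) + c * D b * D (D a))
      + ((a * c) * D (D (D b)) * 1 + D (D b) * (D a * c + a * D c) * 1)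
      - (a * D c * D (D b) + c * D a * D (D b)) := by
    rw [Algebra.smul_def, map_ofNat]; ring
  rw [← key] at hmem
  have h3 := M.smul_mem ((3:K)⁻¹) hmem
  rwa [inv_smul_smul₀ three_ne_zero] at h3
end

section
/- Let J be a Jordan algebra over a field of characteristic 0 satisfying the identities k(x,y;z,t) = (xy,z,t)-(x,z,t)y-x(y,z,t) = 0 and h_x(a,b) = ((a,a,x),b,b) - ((b,b,x),a,a) = 0 for all elements. Then J satisfies ((a,b,b),c,c) = 0 for all a,b,c. -/
variable {K : Type*} [Field K] [CharZero K]
variable {J : Type*} [NonUnitalNonAssocCommRing J] [Module K J]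
  [SMulCommClass K J J] [IsScalarTower K J J]

set_option maxHeartbeats 2000000 in
/-- If a Jordan algebra over a field of characteristic 0 satisfies
`k(x,y;z,t) = (xy,z,t)-(x,z,t)y-x(y,z,t) = 0` and
`h_x(a,b) = ((a,a,x),b,b) - ((b,b,x),a,a) = 0` identically,
then it satisfies `((a,b,b),c,c) = 0`. -/
theorem stmt17 (hJordan : ∀ x y : J, assoc (x*x) y x = 0)
    (hk : ∀ x y z t : J, assoc (x*y) z t - assoc x z t * y - x * assoc y z t = 0)
    (hh : ∀ x a b : J, assoc (assoc a a x) b b - assoc (assoc b b x) a a = 0) :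
    ∀ a b c : J, assoc (assoc a b b) c c = 0 := by
  intro a b c
  have hm1 : c * (assoc (a*c) b b - assoc a b b * c - a * assoc c b b) = 0 := by
    rw [hk a c b b, mul_zero]
  have hm2 : c * (assoc (a*b) c b - assoc a c b * b - a * assoc b c b) = 0 := by
    rw [hk a b c b, mul_zero]
  have hm3 : a * (assoc (c*c) b b - assoc c b b * c - c * assoc c b b) = 0 := by
    rw [hk c c b b, mul_zero]
  have hm4 : a * (assoc (c*b) c b - assoc c c b * b - c * assoc b c b) = 0 := by
    rw [hk c b c b, mul_zero]
  have hm5 : a * (assoc (c*b) b c - assoc c b c * b - c * assoc b b c) = 0 := by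
    rw [hk c b b c, mul_zero]
  linear_combination (norm := (simp only [assoc, smul_sub, smul_add, smul_neg, mul_add,
      add_mul, mul_sub, sub_mul, neg_mul, mul_neg, mul_comm]; abel))
    (2:ℤ) • (hh c (a+a+c) (a+b)) +
    (2:ℤ) • (hh a (a+a+c) (a+b)) +
    (-2:ℤ) • (hh c (a+c) (a+b)) +
    (-4:ℤ) • (hh a (a+c) (a+b)) +
    (-1:ℤ) • (hh c (a+a+c) (a+a+b)) +
    (-5:ℤ) • (hk c (c*a) b b) +
    (2:ℤ) • (hk a (c*c) b b) +
    (2:ℤ) • (hh a (a+c) (a+a+b)) +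
    (1:ℤ) • hm1 +
    (1:ℤ) • (hh c (a+c) (a+a+b)) +
    (-3:ℤ) • (hk a c b (b*c)) +
    (-6:ℤ) • (hh c a (a+b)) +
    (3:ℤ) • (hh c a (a+a+b)) +
    (-3:ℤ) • (hk a c c (b*b)) +
    (-2:ℤ) • (hh c a (a+a+c)) +
    (2:ℤ) • (hh c a (a+c)) +
    (-3:ℤ) • (hk (c*a) b b c) +
    (-3:ℤ) • (hk c b (c*a) b) +
    (3:ℤ) • (hk a (b*c) c b) +
    (3:ℤ) • (hk a b (b*c) c) +
    (-3:ℤ) • (hk a b c (b*c)) +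
    (3:ℤ) • hm2 +
    (-3:ℤ) • (hk c b (b*a) c) +
    (3:ℤ) • (hk a c (b*c) b) +
    (3:ℤ) • (hk a c (b*b) c) +
    (5:ℤ) • hm3 +
    (-1:ℤ) • (hh a (a+a+c) (a+a+b)) +
    (-4:ℤ) • (hh a a (a+b)) +
    (2:ℤ) • (hh a a (a+a+b)) +
    (4:ℤ) • (hh a a (a+c)) +
    (-2:ℤ) • (hh a a (a+a+c)) +
    (3:ℤ) • hm4 +
    (6:ℤ) • hm5
end
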